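/- arXiv:1602.06509 — 7 statements merged into one kernel-verified Lean document; each statement's English description precedes it below -/
import Mathlib

section
/- Let X and Z be independent real random variables with Z standard Gaussian and E[X²] < ∞, let τ > 0, and set R = X + τZ. If η : ℝ → ℝ is differentiable and divergence-free, i.e. E[η'(R)] = 0, and η(R), Z·η(R), X·η(R) are integrable, then E[τZ · η(R)] = 0 and, equivalently, E[(R − X)·(η(R) − X)] = 0; that is, the input error R − X and the output error η(R) − X of the estimator are orthogonal. -/
open MeasureTheory ProbabilityTheory Real Filter Set
open scoped ENNReal NNReal

noncomputable section

namespace DivFreeAux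

lemma phi_eq (x : ℝ) :
    gaussianPDFReal 0 1 x = (Real.sqrt (2 * Real.pi))⁻¹ * Real.exp (-x ^ 2 / 2) := by
  simp [gaussianPDFReal]

lemma phi_continuous : Continuous (gaussianPDFReal 0 1) := by
  have : (gaussianPDFReal 0 1)
      = fun x => (Real.sqrt (2 * Real.pi))⁻¹ * Real.exp (-x ^ 2 / 2) := funext phi_eq
  rw [this]
  fun_prop

lemma hasDerivAt_phi (x : ℝ) :
    HasDerivAt (gaussianPDFReal 0 1) (-x * gaussianPDFReal 0 1 x) x := by
  have hrw : (gaussianPDFReal 0 1)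
      = fun y => (Real.sqrt (2 * Real.pi))⁻¹ * Real.exp (-y ^ 2 / 2) := funext phi_eq
  rw [hrw]
  have h1 : HasDerivAt (fun y : ℝ => -y ^ 2 / 2) (-x) x := by
    have := ((hasDerivAt_pow 2 x).neg).div_const 2
    refine this.congr_deriv ?_
    ring
  have h2 := (h1.exp).const_mul ((Real.sqrt (2 * Real.pi))⁻¹)
  refine h2.congr_deriv ?_
  simp only []
  ring

lemma gauss_map : gaussianReal 0 1 =
    volume.withDensity (fun x => ((Real.toNNReal (gaussianPDFReal 0 1 x)) : ℝ≥0∞)) := by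
  rw [gaussianReal_of_var_ne_zero 0 one_ne_zero]
  rfl

lemma meas_toNNReal : Measurable (fun x => Real.toNNReal (gaussianPDFReal 0 1 x)) :=
  (measurable_gaussianPDFReal 0 1).real_toNNReal

lemma gauss_integrable_iff (g : ℝ → ℝ) :
    Integrable g (gaussianReal 0 1) ↔
      Integrable (fun z => g z * gaussianPDFReal 0 1 z) volume := by
  rw [gauss_map]
  have heq : ∀ z, Real.toNNReal (gaussianPDFReal 0 1 z) • g z
      = g z * gaussianPDFReal 0 1 z := fun z => by
    simp [NNReal.smul_def, Real.coe_toNNReal _ (gaussianPDFReal_nonneg 0 1 z), mul_comm]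
  constructor
  · intro h
    exact ((integrable_withDensity_iff_integrable_smul meas_toNNReal).mp h).congr
      (Filter.Eventually.of_forall heq)
  · intro h
    exact (integrable_withDensity_iff_integrable_smul meas_toNNReal).mpr
      (h.congr (Filter.Eventually.of_forall fun z => (heq z).symm))

lemma gauss_integral (g : ℝ → ℝ) :
    ∫ z, g z ∂(gaussianReal 0 1) = ∫ z, g z * gaussianPDFReal 0 1 z := by
  rw [gauss_map, integral_withDensity_eq_integral_smul meas_toNNReal]
  congr 1
  funext z
  simp [NNReal.smul_def, Real.coe_toNNReal _ (gaussianPDFReal_nonneg 0 1 z), mul_comm]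

lemma stein_vol {g g' : ℝ → ℝ} (hg : ∀ z, HasDerivAt g (g' z) z)
    (h1 : Integrable (fun z => g' z * gaussianPDFReal 0 1 z) volume)
    (h2 : Integrable (fun z => z * g z * gaussianPDFReal 0 1 z) volume) :
    ∫ z, z * g z * gaussianPDFReal 0 1 z = ∫ z, g' z * gaussianPDFReal 0 1 z := by
  have hcontg : Continuous g := by
    apply continuous_iff_continuousAt.2 (fun z => (hg z).continuousAt)
  have hcont : Continuous fun z => g z * gaussianPDFReal 0 1 z := hcontg.mul phi_continuous
  have hder : ∀ z, HasDerivAt (fun y => g y * gaussianPDFReal 0 1 y)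
      (g' z * gaussianPDFReal 0 1 z - z * g z * gaussianPDFReal 0 1 z) z := by
    intro z
    have := (hg z).mul (hasDerivAt_phi z)
    refine this.congr_deriv ?_
    ring
  have hint' : Integrable
      (fun z => g' z * gaussianPDFReal 0 1 z - z * g z * gaussianPDFReal 0 1 z) volume :=
    h1.sub h2
  have hint : Integrable (fun z => g z * gaussianPDFReal 0 1 z) volume := by
    have hs : MeasurableSet (Icc (-1:ℝ) 1) := measurableSet_Icc
    have hIcc : IntegrableOn (fun z => g z * gaussianPDFReal 0 1 z) (Icc (-1:ℝ) 1) :=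
      hcont.continuousOn.integrableOn_compact isCompact_Icc
    have hcompl : IntegrableOn (fun z => g z * gaussianPDFReal 0 1 z) (Icc (-1:ℝ) 1)ᶜ := by
      apply Integrable.mono h2.integrableOn hcont.aestronglyMeasurable.restrict
      rw [ae_restrict_iff' hs.compl]
      filter_upwards with z hz
      have h1z : 1 ≤ |z| := by
        simp only [Set.mem_compl_iff, Set.mem_Icc, not_and_or, not_le] at hz
        rcases hz with h | h
        · rw [le_abs]; right; linarith
        · rw [le_abs]; left; linarith
      simp only [Real.norm_eq_abs, mul_assoc]
      calc |g z * gaussianPDFReal 0 1 z|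
          = 1 * |g z * gaussianPDFReal 0 1 z| := (one_mul _).symm
        _ ≤ |z| * |g z * gaussianPDFReal 0 1 z| := by
            apply mul_le_mul_of_nonneg_right h1z (abs_nonneg _)
        _ = |z * (g z * gaussianPDFReal 0 1 z)| := (abs_mul _ _).symm
    have := hIcc.union hcompl
    rwa [Set.union_compl_self, integrableOn_univ] at this
  have h0 := integral_eq_zero_of_hasDerivAt_of_integrable hder hint' hint
  rw [integral_sub h1 h2] at h0
  linarith

lemma stein_gauss {g g' : ℝ → ℝ} (hg : ∀ z, HasDerivAt g (g' z) z)
    (h1 : Integrable g' (gaussianReal 0 1))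
    (h2 : Integrable (fun z => z * g z) (gaussianReal 0 1)) :
    ∫ z, z * g z ∂(gaussianReal 0 1) = ∫ z, g' z ∂(gaussianReal 0 1) := by
  rw [gauss_integral, gauss_integral]
  exact stein_vol hg ((gauss_integrable_iff _).mp h1) ((gauss_integrable_iff _).mp h2)

lemma int_id_gauss : Integrable (fun z : ℝ => z) (gaussianReal 0 1) := by
  rw [gauss_integrable_iff]
  have h := integrable_mul_exp_neg_mul_sq (b := (1:ℝ)/2) (by norm_num)
  have h2 := h.const_mul ((Real.sqrt (2 * Real.pi))⁻¹)
  refine h2.congr (Filter.Eventually.of_forall fun z => ?_)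
  simp only []
  rw [phi_eq, show -(1/2 : ℝ) * z ^ 2 = -z ^ 2 / 2 by ring]
  ring

lemma mean_zero : ∫ z : ℝ, z ∂(gaussianReal 0 1) = 0 := by
  have h := stein_gauss (g := fun _ => (1:ℝ)) (g' := fun _ => (0:ℝ))
    (fun z => hasDerivAt_const z 1) (integrable_zero _ _ _)
    (by simpa using int_id_gauss)
  simpa using h

end DivFreeAux

end

open DivFreeAux

/-- Proposition 2 of the paper and its equivalent form (III-A-orth3): if `η` is
divergence-free, i.e. `E[η'(R)] = 0` for `R = X + τZ` with `Z` standard Gaussian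
independent of `X`, then `E[τZ·η(R)] = 0`, and equivalently the input error `R − X`
and output error `η(R) − X` are orthogonal: `E[(R − X)(η(R) − X)] = 0`. -/
theorem divergence_free_orthogonality
    {Ω : Type*} [MeasurableSpace Ω] (μ : Measure Ω) [IsProbabilityMeasure μ]
    (X Z : Ω → ℝ) (hX : Measurable X) (hZ : Measurable Z)
    (hZlaw : Measure.map Z μ = gaussianReal 0 1)
    (hindep : IndepFun X Z μ)
    (hX2 : MemLp X 2 μ)
    (τ : ℝ) (hτ : 0 < τ)
    (η : ℝ → ℝ) (hη : Differentiable ℝ η)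
    (hint0 : Integrable (fun ω => deriv η (X ω + τ * Z ω)) μ)
    (hdf : ∫ ω, deriv η (X ω + τ * Z ω) ∂μ = 0)
    (hint1 : Integrable (fun ω => η (X ω + τ * Z ω)) μ)
    (hint2 : Integrable (fun ω => Z ω * η (X ω + τ * Z ω)) μ)
    (hint3 : Integrable (fun ω => X ω * η (X ω + τ * Z ω)) μ) :
    (∫ ω, τ * Z ω * η (X ω + τ * Z ω) ∂μ = 0)
    ∧ (∫ ω, ((X ω + τ * Z ω) - X ω) * (η (X ω + τ * Z ω) - X ω) ∂μ = 0) := by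
  have hpair : AEMeasurable (fun ω => (X ω, Z ω)) μ := (hX.prodMk hZ).aemeasurable
  have hmap : Measure.map (fun ω => (X ω, Z ω)) μ
      = (Measure.map X μ).prod (gaussianReal 0 1) := by
    rw [← hZlaw]
    exact (indepFun_iff_map_prod_eq_prod_map_map hX.aemeasurable hZ.aemeasurable).mp hindep
  set ν := Measure.map X μ with hν
  have hηc : Continuous η := hη.continuous
  have hdm : Measurable (deriv η) := measurable_deriv η
  have hadd : Measurable fun p : ℝ × ℝ => p.1 + τ * p.2 :=
    measurable_fst.add (measurable_snd.const_mul τ)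
  have hF0m : Measurable fun p : ℝ × ℝ => deriv η (p.1 + τ * p.2) := hdm.comp hadd
  have hF1m : Measurable fun p : ℝ × ℝ => p.2 * η (p.1 + τ * p.2) :=
    measurable_snd.mul (hηc.measurable.comp hadd)
  have hI0 : Integrable (fun p : ℝ × ℝ => deriv η (p.1 + τ * p.2))
      (ν.prod (gaussianReal 0 1)) := by
    rw [← hmap]
    exact (integrable_map_measure hF0m.aestronglyMeasurable hpair).mpr hint0
  have hI1 : Integrable (fun p : ℝ × ℝ => p.2 * η (p.1 + τ * p.2))
      (ν.prod (gaussianReal 0 1)) := by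
    rw [← hmap]
    exact (integrable_map_measure hF1m.aestronglyMeasurable hpair).mpr hint2
  have hE0 : ∫ p : ℝ × ℝ, deriv η (p.1 + τ * p.2) ∂(ν.prod (gaussianReal 0 1)) = 0 := by
    rw [← hmap, integral_map hpair hF0m.aestronglyMeasurable]
    exact hdf
  have key : ∫ p : ℝ × ℝ, p.2 * η (p.1 + τ * p.2) ∂(ν.prod (gaussianReal 0 1)) = 0 := by
    rw [integral_prod _ hI1]
    have hinner : ∀ᵐ x ∂ν, (∫ z, z * η (x + τ * z) ∂(gaussianReal 0 1))
        = τ * ∫ z, deriv η (x + τ * z) ∂(gaussianReal 0 1) := by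
      filter_upwards [hI0.prod_right_ae, hI1.prod_right_ae] with x h0 h1
      have hgd : ∀ z, HasDerivAt (fun z => η (x + τ * z)) (τ * deriv η (x + τ * z)) z := by
        intro z
        have hu : HasDerivAt (fun z : ℝ => x + τ * z) τ z := by
          simpa using ((hasDerivAt_id z).const_mul τ).const_add x
        have := (hη (x + τ * z)).hasDerivAt.comp z hu
        simpa [mul_comm, Function.comp_def] using this
      have hst := stein_gauss (g := fun z => η (x + τ * z))
        (g' := fun z => τ * deriv η (x + τ * z)) hgd (h0.const_mul τ) h1
      rw [hst, integral_const_mul]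
    calc ∫ x, ∫ z, z * η (x + τ * z) ∂(gaussianReal 0 1) ∂ν
        = ∫ x, τ * ∫ z, deriv η (x + τ * z) ∂(gaussianReal 0 1) ∂ν :=
          integral_congr_ae hinner
      _ = τ * ∫ x, ∫ z, deriv η (x + τ * z) ∂(gaussianReal 0 1) ∂ν := integral_const_mul τ _
      _ = τ * ∫ p : ℝ × ℝ, deriv η (p.1 + τ * p.2) ∂(ν.prod (gaussianReal 0 1)) := by
          rw [integral_prod _ hI0]
      _ = 0 := by rw [hE0, mul_zero]
  have hZη : ∫ ω, Z ω * η (X ω + τ * Z ω) ∂μ = 0 := by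
    calc ∫ ω, Z ω * η (X ω + τ * Z ω) ∂μ
        = ∫ p : ℝ × ℝ, p.2 * η (p.1 + τ * p.2) ∂(ν.prod (gaussianReal 0 1)) := by
          rw [← hmap, integral_map hpair hF1m.aestronglyMeasurable]
      _ = 0 := key
  have first : ∫ ω, τ * Z ω * η (X ω + τ * Z ω) ∂μ = 0 := by
    simp_rw [mul_assoc]
    rw [integral_const_mul, hZη, mul_zero]
  refine ⟨first, ?_⟩
  have hXint : Integrable X μ := hX2.integrable one_le_two
  have hZint : Integrable Z μ := by
    have h : Integrable (fun z : ℝ => z) (Measure.map Z μ) := hZlaw ▸ int_id_gauss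
    exact (integrable_map_measure aestronglyMeasurable_id hZ.aemeasurable).mp h
  have hXZ : Integrable (fun ω => Z ω * X ω) μ :=
    hindep.symm.integrable_mul hZint hXint
  have hEZ : ∫ ω, Z ω ∂μ = 0 := by
    have h0 : ∫ z : ℝ, z ∂(gaussianReal 0 1) = 0 := mean_zero
    rw [← hZlaw, integral_map (f := fun z : ℝ => z) hZ.aemeasurable aestronglyMeasurable_id] at h0
    exact h0
  have hEZX : ∫ ω, Z ω * X ω ∂μ = 0 := by
    have h := hindep.symm.integral_mul_eq_mul_integral hZ.aestronglyMeasurable hX.aestronglyMeasurable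
    have h' : ∫ ω, Z ω * X ω ∂μ = (∫ ω, Z ω ∂μ) * ∫ ω, X ω ∂μ := h
    rw [h', hEZ, zero_mul]
  have hrw : (fun ω => ((X ω + τ * Z ω) - X ω) * (η (X ω + τ * Z ω) - X ω))
      = fun ω => τ * (Z ω * η (X ω + τ * Z ω)) - τ * (Z ω * X ω) := by
    funext ω; ring
  rw [hrw, integral_sub (hint2.const_mul τ) (hXZ.const_mul τ),
    integral_const_mul, integral_const_mul, hZη, hEZX]
  ring
end

section
/- Let N ≥ 1, let v², σ² > 0, and let λ₁,…,λ_N be nonnegative reals with Σᵢ λᵢ² > 0. Define mmse_A(v²) = (1/N)·Σᵢ σ²·v²/(v²λᵢ² + σ²), and for the choice ĝᵢ = v²·λᵢ/(v²λᵢ² + σ²) define Φ(v²) = ((1/N)·Σᵢ ĝᵢ²λᵢ²)/((1/N)·Σᵢ ĝᵢλᵢ)² − 1)·v² + ((1/N)·Σᵢ ĝᵢ²)/((1/N)·Σᵢ ĝᵢλᵢ)²·σ². Then mmse_A(v²) < v² and Φ(v²) = (1/mmse_A(v²) − 1/v²)⁻¹. -/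
open scoped BigOperators

/-- Closed form (opt_SE_opt_a) of the paper: with `mmse_A(v²) = (1/N)·Σᵢ σ²v²/(v²λᵢ²+σ²)`
and the LMMSE singular values `ĝᵢ = v²λᵢ/(v²λᵢ²+σ²)`, the state-evolution map
`Φ(v²) = ((1/N)Σĝᵢ²λᵢ²/((1/N)Σĝᵢλᵢ)² − 1)·v² + (1/N)Σĝᵢ²/((1/N)Σĝᵢλᵢ)²·σ²`
satisfies `mmse_A(v²) < v²` and `Φ(v²) = (1/mmse_A(v²) − 1/v²)⁻¹`. -/
theorem optimized_SE_map_closed_form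
    (N : ℕ) (hN : 1 ≤ N)
    (v2 σ2 : ℝ) (hv2 : 0 < v2) (hσ2 : 0 < σ2)
    (lam : Fin N → ℝ) (hlam : ∀ i, 0 ≤ lam i)
    (hlam2 : 0 < ∑ i, lam i ^ 2)
    (g : Fin N → ℝ) (hgdef : ∀ i, g i = v2 * lam i / (v2 * lam i ^ 2 + σ2))
    (mmseA : ℝ) (hmmseA : mmseA = (1 / N : ℝ) * ∑ i, σ2 * v2 / (v2 * lam i ^ 2 + σ2))
    (Phi : ℝ)
    (hPhi : Phi = (((1 / N : ℝ) * ∑ i, g i ^ 2 * lam i ^ 2)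
          / ((1 / N : ℝ) * ∑ i, g i * lam i) ^ 2 - 1) * v2
        + ((1 / N : ℝ) * ∑ i, g i ^ 2)
          / ((1 / N : ℝ) * ∑ i, g i * lam i) ^ 2 * σ2) :
    mmseA < v2 ∧ Phi = (1 / mmseA - 1 / v2)⁻¹ := by
  have hd : ∀ i, 0 < v2 * lam i ^ 2 + σ2 := fun i =>
    add_pos_of_nonneg_of_pos (mul_nonneg hv2.le (sq_nonneg _)) hσ2
  have hNpos : (0:ℝ) < N := by exact_mod_cast Nat.lt_of_lt_of_le Nat.zero_lt_one hN
  obtain ⟨j, hj⟩ : ∃ i, lam i ≠ 0 := by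
    by_contra h
    push_neg at h
    simp [h] at hlam2
  have hterm_le : ∀ i, σ2 * v2 / (v2 * lam i ^ 2 + σ2) ≤ v2 := fun i => by
    rw [div_le_iff₀ (hd i)]
    nlinarith [mul_nonneg (mul_nonneg hv2.le hv2.le) (sq_nonneg (lam i))]
  have hterm_lt : σ2 * v2 / (v2 * lam j ^ 2 + σ2) < v2 := by
    rw [div_lt_iff₀ (hd j)]
    have hj2 : 0 < lam j ^ 2 := by positivity
    nlinarith [mul_pos (mul_pos hv2 hv2) hj2]
  have hterm_pos : ∀ i, 0 < σ2 * v2 / (v2 * lam i ^ 2 + σ2) := fun i =>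
    div_pos (mul_pos hσ2 hv2) (hd i)
  have hsum_lt : ∑ i, σ2 * v2 / (v2 * lam i ^ 2 + σ2) < ∑ _i : Fin N, v2 :=
    Finset.sum_lt_sum (fun i _ => hterm_le i) ⟨j, Finset.mem_univ j, hterm_lt⟩
  have hm_lt : mmseA < v2 := by
    rw [hmmseA]
    have : (1 / N : ℝ) * ∑ i, σ2 * v2 / (v2 * lam i ^ 2 + σ2)
        < (1 / N : ℝ) * (N * v2) := by
      apply mul_lt_mul_of_pos_left _ (by positivity)
      simpa using hsum_lt
    calc (1 / N : ℝ) * ∑ i, σ2 * v2 / (v2 * lam i ^ 2 + σ2)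
        < (1 / N : ℝ) * (N * v2) := this
      _ = v2 := by field_simp
  have hm_pos : 0 < mmseA := by
    rw [hmmseA]
    exact mul_pos (by positivity)
      (Finset.sum_pos (fun i _ => hterm_pos i) ⟨j, Finset.mem_univ j⟩)
  refine ⟨hm_lt, ?_⟩
  set S : ℝ := (1 / N : ℝ) * ∑ i, g i * lam i with hS
  -- pointwise: g i * lam i = 1 - (σ2*v2/(d i))/v2
  have hgl : ∀ i, g i * lam i = 1 - σ2 * v2 / (v2 * lam i ^ 2 + σ2) / v2 := fun i => by
    rw [hgdef i]
    have := (hd i).ne'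
    field_simp
    ring
  have hS_eq : S = 1 - mmseA / v2 := by
    rw [hS, hmmseA]
    have : ∑ i, g i * lam i
        = (N : ℝ) - (∑ i, σ2 * v2 / (v2 * lam i ^ 2 + σ2)) / v2 := by
      rw [Finset.sum_congr rfl (fun i _ => hgl i), Finset.sum_sub_distrib]
      simp [Finset.sum_div]
    rw [this]
    field_simp
  have hS_pos : 0 < S := by
    rw [hS_eq]
    have : mmseA / v2 < 1 := (div_lt_one hv2).mpr hm_lt
    linarith
  -- pointwise: g i ^2 * lam i ^2 * v2 + g i ^2 * σ2 = v2 * (g i * lam i)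
  have hkey : ∀ i, g i ^ 2 * lam i ^ 2 * v2 + g i ^ 2 * σ2 = v2 * (g i * lam i) := fun i => by
    rw [hgdef i]
    have := (hd i).ne'
    field_simp
  have hAB : ((1 / N : ℝ) * ∑ i, g i ^ 2 * lam i ^ 2) * v2
      + ((1 / N : ℝ) * ∑ i, g i ^ 2) * σ2 = v2 * S := by
    rw [hS]
    have : (∑ i, g i ^ 2 * lam i ^ 2) * v2 + (∑ i, g i ^ 2) * σ2
        = v2 * ∑ i, g i * lam i := by
      rw [Finset.sum_mul, Finset.sum_mul, Finset.mul_sum, ← Finset.sum_add_distrib]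
      exact Finset.sum_congr rfl (fun i _ => hkey i)
    linear_combination (1 / (N:ℝ)) * this
  have hPhi' : Phi = v2 / S - v2 := by
    have hrw : Phi = (((1 / N : ℝ) * ∑ i, g i ^ 2 * lam i ^ 2) * v2
        + ((1 / N : ℝ) * ∑ i, g i ^ 2) * σ2) / S ^ 2 - v2 := by
      rw [hPhi]; ring
    rw [hrw, hAB, pow_two, mul_div_mul_right _ _ hS_pos.ne']
  rw [hPhi', hS_eq]
  rw [div_sub_div _ _ hm_pos.ne' hv2.ne']
  have hvm : v2 - mmseA ≠ 0 := by linarith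
  rw [inv_div]
  field_simp
  ring
end

section
/- Let N ≥ 1, let σ² > 0, and let λ₁,…,λ_N be nonnegative reals. Define mmse_A(v) = (1/N)·Σᵢ σ²·v/(v·λᵢ² + σ²) for v > 0. Then for every v > 0, the derivative satisfies (d/dv) mmse_A(v) ≥ (mmse_A(v)/v)². -/
open scoped BigOperators

/-- Inequality (AppIV-5) in Appendix III of the paper: for
`mmse_A(v) = (1/N)·Σᵢ σ²v/(vλᵢ² + σ²)`, the derivative satisfies
`(d/dv) mmse_A(v) ≥ (mmse_A(v)/v)²` for every `v > 0`. -/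
theorem mmseA_deriv_lower_bound
    (N : ℕ) (hN : 1 ≤ N)
    (σ2 : ℝ) (hσ2 : 0 < σ2)
    (lam : Fin N → ℝ) (hlam : ∀ i, 0 ≤ lam i) :
    ∀ v : ℝ, 0 < v →
      deriv (fun w : ℝ => (1 / N : ℝ) * ∑ i, σ2 * w / (w * lam i ^ 2 + σ2)) v
        ≥ (((1 / N : ℝ) * ∑ i, σ2 * v / (v * lam i ^ 2 + σ2)) / v) ^ 2 := by
  intro v hv
  have hd : ∀ i : Fin N, 0 < v * lam i ^ 2 + σ2 := fun i => by
    have := hlam i; positivity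
  -- derivative computation
  have hder : HasDerivAt (fun w : ℝ => (1 / N : ℝ) * ∑ i, σ2 * w / (w * lam i ^ 2 + σ2))
      ((1 / N : ℝ) * ∑ i, σ2 ^ 2 / (v * lam i ^ 2 + σ2) ^ 2) v := by
    have h1 : HasDerivAt (fun w : ℝ => ∑ i, σ2 * w / (w * lam i ^ 2 + σ2))
        (∑ i, σ2 ^ 2 / (v * lam i ^ 2 + σ2) ^ 2) v := by
      apply HasDerivAt.fun_sum
      intro i _
      have hnum : HasDerivAt (fun w : ℝ => σ2 * w) σ2 v := by
        simpa using (hasDerivAt_id v).const_mul σ2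
      have hden : HasDerivAt (fun w : ℝ => w * lam i ^ 2 + σ2) (lam i ^ 2) v := by
        simpa using ((hasDerivAt_id v).mul_const (lam i ^ 2)).add_const σ2
      have := hnum.fun_div hden (ne_of_gt (hd i))
      exact this.congr_deriv (by ring)
    simpa using h1.const_mul ((1 : ℝ) / N)
  rw [hder.deriv]
  -- rewrite RHS
  have hNpos : (0 : ℝ) < N := by exact_mod_cast Nat.lt_of_lt_of_le Nat.zero_lt_one hN
  have hrhs : (((1 / N : ℝ) * ∑ i, σ2 * v / (v * lam i ^ 2 + σ2)) / v)
      = (1 / N : ℝ) * ∑ i, σ2 / (v * lam i ^ 2 + σ2) := by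
    rw [Finset.mul_sum, Finset.mul_sum, Finset.sum_div]
    congr 1; ext i
    field_simp
  rw [hrhs]
  -- Cauchy–Schwarz / Jensen step
  set a : Fin N → ℝ := fun i => σ2 / (v * lam i ^ 2 + σ2) with ha
  have key : (∑ i, a i) ^ 2 ≤ (N : ℝ) * ∑ i, (a i) ^ 2 := by
    have := sq_sum_le_card_mul_sum_sq (s := Finset.univ) (f := a)
    simpa using this
  have hsq : ∀ i, (a i) ^ 2 = σ2 ^ 2 / (v * lam i ^ 2 + σ2) ^ 2 := fun i => by
    simp [ha, div_pow]
  have hsum : ∑ i, σ2 ^ 2 / (v * lam i ^ 2 + σ2) ^ 2 = ∑ i, (a i) ^ 2 := by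
    simp [hsq]
  rw [hsum, ge_iff_le, mul_pow]
  have h2 : ((1 / N : ℝ)) ^ 2 * (∑ i, a i) ^ 2 ≤ (1 / N : ℝ) ^ 2 * ((N : ℝ) * ∑ i, (a i) ^ 2) := by
    apply mul_le_mul_of_nonneg_left key (by positivity)
  calc ((1 / N : ℝ)) ^ 2 * (∑ i, a i) ^ 2 ≤ (1 / N : ℝ) ^ 2 * ((N : ℝ) * ∑ i, (a i) ^ 2) := h2
    _ = (1 / N : ℝ) * ∑ i, (a i) ^ 2 := by field_simp
end

section
/- Let N ≥ 1, let σ² > 0, and let λ₁,…,λ_N be nonnegative reals with Σᵢ λᵢ² > 0. Define mmse_A(v) = (1/N)·Σᵢ σ²·v/(v·λᵢ² + σ²) and Φ*(v) = (1/mmse_A(v) − 1/v)⁻¹ = v·mmse_A(v)/(v − mmse_A(v)) for v > 0. Then 0 < mmse_A(v) < v for all v > 0, and Φ* is monotonically nondecreasing on (0, ∞). -/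
open scoped BigOperators

private lemma key_sum_ineq (N : ℕ) (σ2 : ℝ) (hσ2 : 0 < σ2) (lam : Fin N → ℝ)
    (u v : ℝ) (hu : 0 < u) (huv : u ≤ v) :
    (∑ i, 1 / (u * lam i ^ 2 + σ2)) * (∑ i, lam i ^ 2 / (v * lam i ^ 2 + σ2)) ≤
    (∑ i, 1 / (v * lam i ^ 2 + σ2)) * (∑ i, lam i ^ 2 / (u * lam i ^ 2 + σ2)) := by
  have hv : 0 < v := hu.trans_le huv
  have hdu : ∀ i, 0 < u * lam i ^ 2 + σ2 := fun i => by positivity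
  have hdv : ∀ i, 0 < v * lam i ^ 2 + σ2 := fun i => by positivity
  set F : Fin N → Fin N → ℝ := fun i j =>
    (1 / (v * lam i ^ 2 + σ2)) * (lam j ^ 2 / (u * lam j ^ 2 + σ2)) -
    (1 / (u * lam i ^ 2 + σ2)) * (lam j ^ 2 / (v * lam j ^ 2 + σ2)) with hF
  have hpair : ∀ i j, 0 ≤ F i j + F j i := by
    intro i j
    have h1 := hdu i
    have h2 := hdv i
    have h3 := hdu j
    have h4 := hdv j
    have hvu : (0:ℝ) ≤ v - u := sub_nonneg.2 huv
    have heq : F i j + F j i = σ2 * (v - u) * (lam i ^ 2 - lam j ^ 2) ^ 2 /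
        ((u * lam i ^ 2 + σ2) * (v * lam i ^ 2 + σ2) * (u * lam j ^ 2 + σ2) *
          (v * lam j ^ 2 + σ2)) := by
      simp only [hF]
      field_simp
      ring
    rw [heq]
    apply div_nonneg
    · exact mul_nonneg (mul_nonneg hσ2.le hvu) (sq_nonneg _)
    · positivity
  have hsum : 0 ≤ ∑ i, ∑ j, F i j := by
    have hcomm : ∑ i, ∑ j, F j i = ∑ i, ∑ j, F i j := Finset.sum_comm
    have hnn : 0 ≤ ∑ i, ∑ j, (F i j + F j i) :=
      Finset.sum_nonneg fun i _ => Finset.sum_nonneg fun j _ => hpair i j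
    have h2 : ∑ i, ∑ j, (F i j + F j i) = ∑ i, ∑ j, F i j + ∑ i, ∑ j, F j i := by
      simp [Finset.sum_add_distrib]
    rw [h2, hcomm] at hnn
    linarith
  have expand : ∑ i, ∑ j, F i j =
      (∑ i, 1 / (v * lam i ^ 2 + σ2)) * (∑ i, lam i ^ 2 / (u * lam i ^ 2 + σ2)) -
      (∑ i, 1 / (u * lam i ^ 2 + σ2)) * (∑ i, lam i ^ 2 / (v * lam i ^ 2 + σ2)) := by
    simp only [hF, Finset.sum_sub_distrib, ← Finset.mul_sum, ← Finset.sum_mul]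
  linarith [hsum, expand]

/-- The `Φ*` part of Lemma 2 of the paper: with
`mmse_A(v) = (1/N)·Σᵢ σ²v/(vλᵢ² + σ²)` one has `0 < mmse_A(v) < v` for all `v > 0`,
the two expressions `(1/mmse_A(v) − 1/v)⁻¹` and `v·mmse_A(v)/(v − mmse_A(v))` for the
optimized state-evolution map `Φ*` agree, and `Φ*` is monotonically nondecreasing on
`(0, ∞)`. -/
theorem optimized_SE_map_monotone
    (N : ℕ) (hN : 1 ≤ N)
    (σ2 : ℝ) (hσ2 : 0 < σ2)
    (lam : Fin N → ℝ) (hlam : ∀ i, 0 ≤ lam i)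
    (hlam2 : 0 < ∑ i, lam i ^ 2)
    (m : ℝ → ℝ)
    (hm : ∀ v : ℝ, m v = (1 / N : ℝ) * ∑ i, σ2 * v / (v * lam i ^ 2 + σ2)) :
    (∀ v : ℝ, 0 < v → 0 < m v ∧ m v < v)
    ∧ (∀ v : ℝ, 0 < v → (1 / m v - 1 / v)⁻¹ = v * m v / (v - m v))
    ∧ MonotoneOn (fun v : ℝ => (1 / m v - 1 / v)⁻¹) (Set.Ioi 0) := by
  have hNpos : 0 < N := hN
  have hNR : (0:ℝ) < (N:ℝ) := by exact_mod_cast hNpos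
  have hNe : (N:ℝ) ≠ 0 := ne_of_gt hNR
  have hne : Nonempty (Fin N) := ⟨⟨0, hNpos⟩⟩
  obtain ⟨i₀, hi₀⟩ : ∃ i, 0 < lam i ^ 2 := by
    by_contra h
    push_neg at h
    have : ∑ i, lam i ^ 2 ≤ 0 := Finset.sum_nonpos fun i _ => h i
    linarith
  have hd : ∀ v : ℝ, 0 < v → ∀ i, 0 < v * lam i ^ 2 + σ2 := fun v hv i => by positivity
  -- sums S₀ and S₁
  have hS0 : ∀ v : ℝ, 0 < v → 0 < ∑ i, 1 / (v * lam i ^ 2 + σ2) := by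
    intro v hv
    exact Finset.sum_pos (fun i _ => by have := hd v hv i; positivity) Finset.univ_nonempty
  have hS1 : ∀ v : ℝ, 0 < v → 0 < ∑ i, lam i ^ 2 / (v * lam i ^ 2 + σ2) := by
    intro v hv
    refine Finset.sum_pos' (fun i _ => div_nonneg (sq_nonneg _) (hd v hv i).le)
      ⟨i₀, Finset.mem_univ i₀, ?_⟩
    have := hd v hv i₀
    positivity
  have hmeq : ∀ v : ℝ, 0 < v → m v = σ2 * v / N * ∑ i, 1 / (v * lam i ^ 2 + σ2) := by
    intro v hv
    rw [hm, Finset.mul_sum, Finset.mul_sum]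
    exact Finset.sum_congr rfl fun i _ => by ring
  have hsub : ∀ v : ℝ, 0 < v →
      v - m v = v ^ 2 / N * ∑ i, lam i ^ 2 / (v * lam i ^ 2 + σ2) := by
    intro v hv
    have hNc : ∑ _i : Fin N, (v / N : ℝ) = v := by
      rw [Finset.sum_const, Finset.card_univ, Fintype.card_fin, nsmul_eq_mul]
      field_simp
    rw [hm]
    calc v - (1 / N : ℝ) * ∑ i, σ2 * v / (v * lam i ^ 2 + σ2)
        = ∑ i, (v / N - (1 / N : ℝ) * (σ2 * v / (v * lam i ^ 2 + σ2))) := by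
          rw [Finset.sum_sub_distrib, hNc, Finset.mul_sum]
      _ = ∑ i, v ^ 2 / N * (lam i ^ 2 / (v * lam i ^ 2 + σ2)) := by
          refine Finset.sum_congr rfl fun i _ => ?_
          have hdi := (hd v hv i).ne'
          field_simp
          ring
      _ = v ^ 2 / N * ∑ i, lam i ^ 2 / (v * lam i ^ 2 + σ2) := (Finset.mul_sum _ _ _).symm
  have part1 : ∀ v : ℝ, 0 < v → 0 < m v ∧ m v < v := by
    intro v hv
    constructor
    · rw [hmeq v hv]
      have := hS0 v hv
      positivity
    · have h := hsub v hv
      have hpos : 0 < v ^ 2 / N * ∑ i, lam i ^ 2 / (v * lam i ^ 2 + σ2) := by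
        have := hS1 v hv
        positivity
      linarith
  have part2 : ∀ v : ℝ, 0 < v → (1 / m v - 1 / v)⁻¹ = v * m v / (v - m v) := by
    intro v hv
    obtain ⟨hm0, hmv⟩ := part1 v hv
    have h1 : 1 / m v - 1 / v = (v - m v) / (m v * v) := by
      field_simp
    rw [h1, inv_div]
    ring
  have hΦ : ∀ v : ℝ, 0 < v → (1 / m v - 1 / v)⁻¹ =
      σ2 * (∑ i, 1 / (v * lam i ^ 2 + σ2)) / ∑ i, lam i ^ 2 / (v * lam i ^ 2 + σ2) := by
    intro v hv
    rw [part2 v hv, hsub v hv, hmeq v hv]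
    have hS1v := (hS1 v hv).ne'
    field_simp
  refine ⟨part1, part2, ?_⟩
  intro a ha b hb hab
  simp only [Set.mem_Ioi] at ha hb
  simp only
  rw [hΦ a ha, hΦ b hb, div_le_div_iff₀ (hS1 a ha) (hS1 b hb)]
  have key := key_sum_ineq N σ2 hσ2 lam a b ha hab
  nlinarith [key, hσ2.le]
end

section
/- Let X and Z be independent real random variables with Z standard Gaussian and E[X²] < ∞, let τ > 0, and set R = X + τZ and mmse_B = E[(E[X|R] − X)²]. Assume 0 < mmse_B < τ², and define η*(r) = C*·(E[X|R = r] − (mmse_B/τ²)·r) with C* = τ²/(τ² − mmse_B). If η : ℝ → ℝ is measurable with E[η(R)²] < ∞ and satisfies the orthogonality condition E[η(R)·(R − X)] = 0, then E[η(R)·(E[X|R] − η*(R))] = 0. -/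
open MeasureTheory ProbabilityTheory

/-- Lemma 4 in Appendix II of the paper: for `R = X + τZ` (`Z` standard Gaussian
independent of `X`), `mmse_B = E[(E[X|R] − X)²]`, and the optimal divergence-free
estimator `η*(r) = C*·(E[X|R=r] − (mmse_B/τ²)·r)` with `C* = τ²/(τ² − mmse_B)`,
any estimator `η` satisfying the orthogonality condition `E[η(R)·(R − X)] = 0`
satisfies `E[η(R)·(E[X|R] − η*(R))] = 0`. -/
theorem eta_star_orthogonality_lemma
    {Ω : Type*} [MeasurableSpace Ω] (μ : Measure Ω) [IsProbabilityMeasure μ]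
    (X Z : Ω → ℝ) (hX : Measurable X) (hZ : Measurable Z)
    (hZlaw : Measure.map Z μ = gaussianReal 0 1)
    (hindep : IndepFun X Z μ)
    (hX2 : MemLp X 2 μ)
    (τ : ℝ) (hτ : 0 < τ)
    (R : Ω → ℝ) (hR : R = fun ω => X ω + τ * Z ω)
    (CE : Ω → ℝ) (hCE : CE = μ[X | MeasurableSpace.comap R inferInstance])
    (mmseB : ℝ) (hmmseB : mmseB = ∫ ω, (CE ω - X ω) ^ 2 ∂μ)
    (hB1 : 0 < mmseB) (hB2 : mmseB < τ ^ 2)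
    (Cstar : ℝ) (hCstar : Cstar = τ ^ 2 / (τ ^ 2 - mmseB))
    (η : ℝ → ℝ) (hη : Measurable η)
    (hη2 : MemLp (fun ω => η (R ω)) 2 μ)
    (horth : ∫ ω, η (R ω) * (R ω - X ω) ∂μ = 0) :
    ∫ ω, η (R ω) * (CE ω - Cstar * (CE ω - mmseB / τ ^ 2 * R ω)) ∂μ = 0 := by
  have hτ2 : (0:ℝ) < τ ^ 2 := by positivity
  have hden : τ ^ 2 - mmseB ≠ 0 := by linarith
  have hRmeas : Measurable R := by rw [hR]; exact hX.add (measurable_const.mul hZ)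
  have hm : MeasurableSpace.comap R inferInstance ≤ ‹MeasurableSpace Ω› := hRmeas.comap_le
  have hfm : StronglyMeasurable[MeasurableSpace.comap R inferInstance]
      (fun ω => η (R ω)) :=
    (hη.comp (Measurable.of_comap_le le_rfl)).stronglyMeasurable
  have hXint : Integrable X μ := hX2.integrable one_le_two
  have hfX : Integrable (fun ω => η (R ω) * X ω) μ := by
    rw [← memLp_one_iff_integrable]
    exact MemLp.smul (r := 1) hX2 hη2
  have h1 := condExp_mul_of_stronglyMeasurable_left (μ := μ) hfm hfX hXint
  have hfCE : Integrable (fun ω => η (R ω) * CE ω) μ := by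
    have : Integrable ((fun ω => η (R ω)) * μ[X | MeasurableSpace.comap R inferInstance]) μ :=
      integrable_condExp.congr h1
    rw [hCE]
    exact this
  have key : ∫ ω, η (R ω) * X ω ∂μ = ∫ ω, η (R ω) * CE ω ∂μ := by
    have h0 := integral_condExp (μ := μ) (f := (fun ω => η (R ω)) * X) hm
    have h2 : ∫ ω, (μ[(fun ω => η (R ω)) * X | MeasurableSpace.comap R inferInstance]) ω ∂μ
        = ∫ ω, η (R ω) * CE ω ∂μ := by
      rw [integral_congr_ae h1, hCE]
      rfl
    calc ∫ ω, η (R ω) * X ω ∂μ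
        = ∫ ω, ((fun ω => η (R ω)) * X) ω ∂μ := rfl
      _ = ∫ ω, (μ[(fun ω => η (R ω)) * X | MeasurableSpace.comap R inferInstance]) ω ∂μ :=
          h0.symm
      _ = ∫ ω, η (R ω) * CE ω ∂μ := h2
  have main : ∫ ω, η (R ω) * (R ω - CE ω) ∂μ = 0 := by
    by_cases hI : Integrable (fun ω => η (R ω) * (R ω - X ω)) μ
    · have hsub : Integrable (fun ω => η (R ω) * X ω - η (R ω) * CE ω) μ := hfX.sub hfCE
      have heq : ∫ ω, η (R ω) * (R ω - CE ω) ∂μ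
          = ∫ ω, (η (R ω) * (R ω - X ω) + (η (R ω) * X ω - η (R ω) * CE ω)) ∂μ := by
        congr 1; funext ω; ring
      rw [heq, integral_add hI hsub, horth, integral_sub hfX hfCE, key]
      ring
    · have hnot : ¬ Integrable (fun ω => η (R ω) * (R ω - CE ω)) μ := by
        intro h
        apply hI
        have h2 : Integrable
            (fun ω => (η (R ω) * (R ω - CE ω) + η (R ω) * CE ω) - η (R ω) * X ω) μ :=
          (h.add hfCE).sub hfX
        have heq : (fun ω => η (R ω) * (R ω - X ω))
            = fun ω => (η (R ω) * (R ω - CE ω) + η (R ω) * CE ω) - η (R ω) * X ω := by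
          funext ω; ring
        rw [heq]
        exact h2
      exact integral_undef hnot
  have heq2 : ∫ ω, η (R ω) * (CE ω - Cstar * (CE ω - mmseB / τ ^ 2 * R ω)) ∂μ
      = ∫ ω, (mmseB / (τ ^ 2 - mmseB)) * (η (R ω) * (R ω - CE ω)) ∂μ := by
    congr 1; funext ω
    rw [hCstar]
    field_simp
    ring
  rw [heq2, integral_const_mul, main, mul_zero]
end

section
/- Let X and Z be independent real random variables with Z standard Gaussian and E[X²] < ∞, let τ > 0, and set R = X + τZ and mmse_B = E[(E[X|R] − X)²]. Assume 0 < mmse_B < τ², and define η*(r) = C*·(E[X|R = r] − (mmse_B/τ²)·r) with C* = τ²/(τ² − mmse_B). Then for every measurable η : ℝ → ℝ with E[η(R)²] < ∞ satisfying the orthogonality condition E[η(R)·(R − X)] = 0, it holds that E[(η(R) − X)²] ≥ E[(η*(R) − X)²], with equality if and only if η(R) = η*(R) almost surely; i.e., η* minimizes the mean-squared error among all such estimators. -/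
open MeasureTheory ProbabilityTheory Real Filter Set Asymptotics
open scoped ENNReal NNReal

/- ### Auxiliary Gaussian integral computations -/

lemma aux_exp_tendsto_atTop : Tendsto (fun x : ℝ => rexp (-(1/2) * x ^ 2)) atTop (nhds 0) :=
  Real.tendsto_exp_atBot.comp <| (tendsto_const_mul_atBot_of_neg (by norm_num : (-(1/2):ℝ) < 0)).mpr
    (tendsto_pow_atTop two_ne_zero)

lemma aux_sq_atBot : Tendsto (fun x : ℝ => x ^ 2) atBot atTop := by
  have h := (tendsto_pow_atTop (two_ne_zero)).comp (tendsto_neg_atBot_atTop (G := ℝ))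
  exact h.congr fun x => neg_sq x

lemma aux_exp_tendsto_atBot : Tendsto (fun x : ℝ => rexp (-(1/2) * x ^ 2)) atBot (nhds 0) :=
  Real.tendsto_exp_atBot.comp <| (tendsto_const_mul_atBot_of_neg (by norm_num : (-(1/2):ℝ) < 0)).mpr
    aux_sq_atBot

lemma aux_xexp_tendsto_atTop : Tendsto (fun x : ℝ => x * rexp (-(1/2) * x ^ 2)) atTop (nhds 0) := by
  have h := (rpow_mul_exp_neg_mul_sq_isLittleO_exp_neg (by norm_num : (0:ℝ) < 1/2) 1).trans_tendsto
    (Real.tendsto_exp_atBot.comp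
      ((tendsto_const_mul_atBot_of_neg (by norm_num : (-(1/2):ℝ) < 0)).mpr tendsto_id))
  simpa [Real.rpow_one] using h

lemma aux_xexp_tendsto_atBot : Tendsto (fun x : ℝ => x * rexp (-(1/2) * x ^ 2)) atBot (nhds 0) := by
  have h := (aux_xexp_tendsto_atTop.comp (tendsto_neg_atBot_atTop (G := ℝ))).neg
  simp only [Function.comp] at h
  have e : (fun x : ℝ => -(-x * rexp (-(1/2) * (-x) ^ 2)))
      = fun x : ℝ => x * rexp (-(1/2) * x ^ 2) := by
    funext x; rw [neg_sq]; ring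
  rwa [e, neg_zero] at h

lemma aux_hasDerivF (x : ℝ) :
    HasDerivAt (fun x : ℝ => -rexp (-(1/2) * x ^ 2)) (x * rexp (-(1/2) * x ^ 2)) x := by
  have h : HasDerivAt (fun x : ℝ => -(1/2) * x ^ 2) (-(1/2) * (2 * x)) x := by
    simpa using (hasDerivAt_pow 2 x).const_mul (-(1/2 : ℝ))
  have := (h.exp).fun_neg
  refine this.congr_deriv ?_
  ring

lemma aux_hasDerivG (x : ℝ) :
    HasDerivAt (fun x : ℝ => -(x * rexp (-(1/2) * x ^ 2)))
      ((x ^ 2 - 1) * rexp (-(1/2) * x ^ 2)) x := by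
  have h : HasDerivAt (fun x : ℝ => -(1/2) * x ^ 2) (-(1/2) * (2 * x)) x := by
    simpa using (hasDerivAt_pow 2 x).const_mul (-(1/2 : ℝ))
  have := ((hasDerivAt_id x).fun_mul h.exp).fun_neg
  refine this.congr_deriv ?_
  simp only [id_eq]
  ring

lemma aux_I0 : Integrable (fun x : ℝ => rexp (-(1/2) * x ^ 2)) :=
  integrable_exp_neg_mul_sq (by norm_num)

lemma aux_I1 : Integrable (fun x : ℝ => x * rexp (-(1/2) * x ^ 2)) :=
  integrable_mul_exp_neg_mul_sq (by norm_num)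

lemma aux_I2 : Integrable (fun x : ℝ => x ^ 2 * rexp (-(1/2) * x ^ 2)) := by
  have h := integrable_rpow_mul_exp_neg_mul_sq (by norm_num : (0:ℝ) < 1/2)
    (by norm_num : (-1:ℝ) < 2)
  have e : (fun x : ℝ => x ^ (2:ℝ) * rexp (-(1/2) * x ^ 2))
      = fun x : ℝ => x ^ 2 * rexp (-(1/2) * x ^ 2) := by
    funext x
    rw [show (2:ℝ) = ((2:ℕ):ℝ) by norm_num, Real.rpow_natCast]
  rwa [e] at h

lemma aux_J1 : ∫ x : ℝ, x * rexp (-(1/2) * x ^ 2) = 0 := by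
  have ha : ∫ x in Ioi (0:ℝ), x * rexp (-(1/2) * x ^ 2) = 1 := by
    have := integral_Ioi_of_hasDerivAt_of_tendsto' (a := 0)
      (fun x _ => aux_hasDerivF x) aux_I1.integrableOn
      (by simpa using aux_exp_tendsto_atTop.neg)
    simpa using this
  have hb : ∫ x in Iic (0:ℝ), x * rexp (-(1/2) * x ^ 2) = -1 := by
    have := integral_Iic_of_hasDerivAt_of_tendsto' (a := 0)
      (fun x _ => aux_hasDerivF x) aux_I1.integrableOn
      (by simpa using aux_exp_tendsto_atBot.neg)
    simpa using this
  rw [← intervalIntegral.integral_Iic_add_Ioi aux_I1.integrableOn aux_I1.integrableOn, ha, hb]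
  ring

lemma aux_J2 : ∫ x : ℝ, x ^ 2 * rexp (-(1/2) * x ^ 2) = Real.sqrt (2 * π) := by
  have hint : Integrable (fun x : ℝ => (x ^ 2 - 1) * rexp (-(1/2) * x ^ 2)) := by
    have := aux_I2.sub aux_I0
    exact this.congr (Filter.Eventually.of_forall fun x => by simp only [Pi.sub_apply]; ring)
  have ha : ∫ x in Ioi (0:ℝ), (x ^ 2 - 1) * rexp (-(1/2) * x ^ 2) = 0 := by
    have := integral_Ioi_of_hasDerivAt_of_tendsto' (a := 0)
      (fun x _ => aux_hasDerivG x) hint.integrableOn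
      (by simpa using aux_xexp_tendsto_atTop.neg)
    simpa using this
  have hb : ∫ x in Iic (0:ℝ), (x ^ 2 - 1) * rexp (-(1/2) * x ^ 2) = 0 := by
    have := integral_Iic_of_hasDerivAt_of_tendsto' (a := 0)
      (fun x _ => aux_hasDerivG x) hint.integrableOn
      (by simpa using aux_xexp_tendsto_atBot.neg)
    simpa using this
  have hzero : ∫ x : ℝ, (x ^ 2 - 1) * rexp (-(1/2) * x ^ 2) = 0 := by
    rw [← intervalIntegral.integral_Iic_add_Ioi hint.integrableOn hint.integrableOn, ha, hb]; ring
  have hsub : ∫ x : ℝ, (x ^ 2 - 1) * rexp (-(1/2) * x ^ 2)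
      = (∫ x : ℝ, x ^ 2 * rexp (-(1/2) * x ^ 2)) - ∫ x : ℝ, rexp (-(1/2) * x ^ 2) := by
    rw [← integral_sub aux_I2 aux_I0]
    congr 1; funext x; ring
  have hJ0 : ∫ x : ℝ, rexp (-(1/2) * x ^ 2) = Real.sqrt (2 * π) := by
    have := integral_gaussian (1/2)
    rw [show π / (1/2) = 2 * π by ring] at this
    simpa using this
  rw [hsub, hJ0] at hzero
  linarith

/- ### Moments of the standard Gaussian measure -/

lemma aux_pdf_eq (x : ℝ) :
    gaussianPDFReal 0 1 x = (Real.sqrt (2 * π))⁻¹ * rexp (-(1/2) * x ^ 2) := by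
  simp only [gaussianPDFReal, NNReal.coe_one, mul_one, sub_zero]
  congr 1
  ring

lemma aux_gauss_int (g : ℝ → ℝ) :
    ∫ x, g x ∂(gaussianReal 0 1) = ∫ x, gaussianPDFReal 0 1 x * g x := by
  rw [gaussianReal_of_var_ne_zero 0 one_ne_zero]
  have h : gaussianPDF 0 1 = fun x => ((gaussianPDFReal 0 1 x).toNNReal : ℝ≥0∞) := rfl
  rw [h, integral_withDensity_eq_integral_smul (measurable_gaussianPDFReal 0 1).real_toNNReal g]
  congr 1
  funext x
  simp [NNReal.smul_def, Real.coe_toNNReal _ (gaussianPDFReal_nonneg 0 1 x)]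

lemma aux_gauss_integrable {g : ℝ → ℝ} (hg : Integrable (fun x => g x * gaussianPDFReal 0 1 x)) :
    Integrable g (gaussianReal 0 1) := by
  rw [gaussianReal_of_var_ne_zero 0 one_ne_zero]
  rw [integrable_withDensity_iff (measurable_gaussianPDF 0 1)
    (Filter.Eventually.of_forall fun x => ENNReal.ofReal_lt_top)]
  refine hg.congr (Filter.Eventually.of_forall fun x => ?_)
  simp [gaussianPDF, ENNReal.toReal_ofReal (gaussianPDFReal_nonneg 0 1 x)]

lemma aux_int_pdf_sq : Integrable (fun x : ℝ => x ^ 2 * gaussianPDFReal 0 1 x) := by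
  have e : (fun x : ℝ => x ^ 2 * gaussianPDFReal 0 1 x)
      = fun x => (Real.sqrt (2 * π))⁻¹ * (x ^ 2 * rexp (-(1/2) * x ^ 2)) := by
    funext x; rw [aux_pdf_eq]; ring
  rw [e]; exact aux_I2.const_mul _

lemma aux_sqrt_ne : Real.sqrt (2 * π) ≠ 0 :=
  ne_of_gt (Real.sqrt_pos.mpr (by positivity))

lemma aux_gauss_mean : ∫ x, x ∂(gaussianReal 0 1) = 0 := by
  rw [aux_gauss_int]
  have e : ∫ x, gaussianPDFReal 0 1 x * x
      = ∫ x, (Real.sqrt (2 * π))⁻¹ * (x * rexp (-(1/2) * x ^ 2)) := by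
    congr 1; funext x; rw [aux_pdf_eq]; ring
  rw [e, integral_const_mul, aux_J1, mul_zero]

lemma aux_gauss_sq : ∫ x, x ^ 2 ∂(gaussianReal 0 1) = 1 := by
  rw [aux_gauss_int]
  have e : ∫ x, gaussianPDFReal 0 1 x * x ^ 2
      = ∫ x, (Real.sqrt (2 * π))⁻¹ * (x ^ 2 * rexp (-(1/2) * x ^ 2)) := by
    congr 1; funext x; rw [aux_pdf_eq]; ring
  rw [e, integral_const_mul, aux_J2, inv_mul_cancel₀ aux_sqrt_ne]

/- ### Probabilistic auxiliary lemmas -/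

lemma my_integrable_mul {Ω : Type*} {m0 : MeasurableSpace Ω} {μ : Measure Ω}
    [IsFiniteMeasure μ] {f g : Ω → ℝ} (hf : MemLp f 2 μ)
    (hg : MemLp g 2 μ) : Integrable (fun ω => f ω * g ω) μ := by
  refine ((hf.integrable_sq.add hg.integrable_sq).div_const 2).mono'
    (hf.aestronglyMeasurable.mul hg.aestronglyMeasurable) ?_
  filter_upwards with ω
  rw [Real.norm_eq_abs, abs_mul]
  simp only [Pi.add_apply]
  nlinarith [abs_nonneg (f ω), abs_nonneg (g ω), sq_abs (f ω), sq_abs (g ω),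
    sq_nonneg (|f ω| - |g ω|)]

lemma my_memLp_condexp {Ω : Type*} {m m0 : MeasurableSpace Ω} (hm : m ≤ m0)
    {μ : Measure Ω} [IsProbabilityMeasure μ]
    {f : Ω → ℝ} (hf : MemLp f 2 μ) : MemLp (μ[f|m]) 2 μ := by
  haveI : SigmaFinite (μ.trim hm) := inferInstance
  have hg : MemLp (((condExpL2 ℝ ℝ hm (hf.toLp f) : Lp ℝ 2 μ)) : Ω → ℝ) 2 μ :=
    Lp.memLp _
  have hae : (((condExpL2 ℝ ℝ hm (hf.toLp f) : Lp ℝ 2 μ)) : Ω → ℝ) =ᵐ[μ] μ[f|m] := by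
    refine ae_eq_condExp_of_forall_setIntegral_eq hm (hf.integrable one_le_two) ?_ ?_ ?_
    · intro s _ _
      exact (hg.integrable one_le_two).integrableOn
    · intro s hs hμs
      have h1 := integral_condExpL2_eq (𝕜 := ℝ) hm (hf.toLp f) hs hμs.ne
      rw [h1]
      exact setIntegral_congr_ae (hm s hs) ((hf.coeFn_toLp).mono fun x hx _ => hx)
    · exact lpMeas.aestronglyMeasurable _
  exact hg.ae_eq hae

lemma my_tower {Ω : Type*} {m m0 : MeasurableSpace Ω} (hm : m ≤ m0)
    {μ : Measure Ω} [IsProbabilityMeasure μ] {f X : Ω → ℝ}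
    (hfm : StronglyMeasurable[m] f) (hf2 : MemLp f 2 μ) (hX2 : MemLp X 2 μ) :
    ∫ ω, f ω * X ω ∂μ = ∫ ω, f ω * (μ[X|m]) ω ∂μ := by
  haveI : SigmaFinite (μ.trim hm) := inferInstance
  have hint : Integrable (f * X) μ := my_integrable_mul hf2 hX2
  calc ∫ ω, f ω * X ω ∂μ = ∫ ω, (μ[f * X|m]) ω ∂μ := (integral_condExp hm).symm
    _ = ∫ ω, (f * μ[X|m]) ω ∂μ := integral_congr_ae
        (condExp_mul_of_stronglyMeasurable_left hfm hint (hX2.integrable one_le_two))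
    _ = ∫ ω, f ω * (μ[X|m]) ω ∂μ := rfl

/-- Nonlinear-estimation optimality in Lemma 1 of the paper: for `R = X + τZ`
(`Z` standard Gaussian independent of `X`), `mmse_B = E[(E[X|R] − X)²]` and the
optimal divergence-free estimator `η*(r) = C*·(E[X|R=r] − (mmse_B/τ²)·r)` with
`C* = τ²/(τ² − mmse_B)`, any estimator `η` satisfying the orthogonality condition
`E[η(R)·(R − X)] = 0` satisfies `E[(η(R) − X)²] ≥ E[(η*(R) − X)²]`, with equality
iff `η(R) = η*(R)` almost surely. -/
theorem eta_star_minimizes_mse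
    {Ω : Type*} [MeasurableSpace Ω] (μ : Measure Ω) [IsProbabilityMeasure μ]
    (X Z : Ω → ℝ) (hX : Measurable X) (hZ : Measurable Z)
    (hZlaw : Measure.map Z μ = gaussianReal 0 1)
    (hindep : IndepFun X Z μ)
    (hX2 : MemLp X 2 μ)
    (τ : ℝ) (hτ : 0 < τ)
    (R : Ω → ℝ) (hR : R = fun ω => X ω + τ * Z ω)
    (CE : Ω → ℝ) (hCE : CE = μ[X | MeasurableSpace.comap R inferInstance])
    (mmseB : ℝ) (hmmseB : mmseB = ∫ ω, (CE ω - X ω) ^ 2 ∂μ)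
    (hB1 : 0 < mmseB) (hB2 : mmseB < τ ^ 2)
    (Cstar : ℝ) (hCstar : Cstar = τ ^ 2 / (τ ^ 2 - mmseB))
    (ηstar : Ω → ℝ) (hηstar : ηstar = fun ω => Cstar * (CE ω - mmseB / τ ^ 2 * R ω))
    (η : ℝ → ℝ) (hη : Measurable η)
    (hη2 : MemLp (fun ω => η (R ω)) 2 μ)
    (horth : ∫ ω, η (R ω) * (R ω - X ω) ∂μ = 0) :
    ∫ ω, (η (R ω) - X ω) ^ 2 ∂μ ≥ ∫ ω, (ηstar ω - X ω) ^ 2 ∂μ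
    ∧ (∫ ω, (η (R ω) - X ω) ^ 2 ∂μ = ∫ ω, (ηstar ω - X ω) ^ 2 ∂μ
        ↔ (fun ω => η (R ω)) =ᵐ[μ] ηstar) := by
  -- basic measurability
  have hRmeas : Measurable R := by rw [hR]; exact hX.add (measurable_const.mul hZ)
  have hm : MeasurableSpace.comap R inferInstance ≤ ‹MeasurableSpace Ω› :=
    measurable_iff_comap_le.mp hRmeas
  -- moments of Z
  have hIZ2 : Integrable (fun ω => Z ω ^ 2) μ := by
    have h1 : Integrable (fun x : ℝ => x ^ 2) (gaussianReal 0 1) :=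
      aux_gauss_integrable (aux_int_pdf_sq.congr
        (Filter.Eventually.of_forall fun x => by ring_nf))
    rw [← hZlaw] at h1
    have h2 := (integrable_map_measure h1.aestronglyMeasurable hZ.aemeasurable).mp h1
    simpa [Function.comp_def] using h2
  have hZ2 : MemLp Z 2 μ := (memLp_two_iff_integrable_sq hZ.aestronglyMeasurable).mpr hIZ2
  have hEZ : ∫ ω, Z ω ∂μ = 0 := by
    have h := integral_map (f := fun x : ℝ => x) hZ.aemeasurable
      (by rw [hZlaw]; exact measurable_id.aestronglyMeasurable)
    rw [hZlaw] at h
    rw [← h]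
    exact aux_gauss_mean
  have hEZ2 : ∫ ω, Z ω ^ 2 ∂μ = 1 := by
    have h := integral_map (f := fun x : ℝ => x ^ 2) hZ.aemeasurable
      (by rw [hZlaw]; exact (measurable_id.pow_const 2).aestronglyMeasurable)
    rw [hZlaw] at h
    rw [← h]
    exact aux_gauss_sq
  have hEXZ : ∫ ω, X ω * Z ω ∂μ = 0 := by
    have h : ∫ ω, X ω * Z ω ∂μ = (∫ ω, X ω ∂μ) * ∫ ω, Z ω ∂μ :=
      hindep.integral_fun_mul_eq_mul_integral hX.aestronglyMeasurable hZ.aestronglyMeasurable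
    rw [h, hEZ, mul_zero]
  -- membership in L²
  have hR2 : MemLp R 2 μ := by rw [hR]; exact hX2.add (hZ2.const_mul τ)
  have hCE2 : MemLp CE 2 μ := by rw [hCE]; exact my_memLp_condexp hm hX2
  have hst2 : MemLp ηstar 2 μ := by
    rw [hηstar]
    exact (hCE2.sub (hR2.const_mul (mmseB / τ ^ 2))).const_mul Cstar
  -- strong measurability w.r.t. the comap σ-algebra
  have hRm' : Measurable[MeasurableSpace.comap R inferInstance] R := fun s hs => ⟨s, hs, rfl⟩
  have hsR : StronglyMeasurable[MeasurableSpace.comap R inferInstance] R :=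
    hRm'.stronglyMeasurable
  have hsη : StronglyMeasurable[MeasurableSpace.comap R inferInstance] (fun ω => η (R ω)) :=
    (hη.comp hRm').stronglyMeasurable
  have hsCE : StronglyMeasurable[MeasurableSpace.comap R inferInstance] CE := by
    rw [hCE]; exact stronglyMeasurable_condExp
  have hsst : StronglyMeasurable[MeasurableSpace.comap R inferInstance] ηstar := by
    rw [hηstar]
    exact ((measurable_const.mul ((hsCE.measurable).sub
      (measurable_const.mul hRm')))).stronglyMeasurable
  -- tower property instances
  have tR : ∫ ω, R ω * X ω ∂μ = ∫ ω, R ω * CE ω ∂μ := by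
    rw [hCE]; exact my_tower hm hsR hR2 hX2
  have tCE : ∫ ω, CE ω * X ω ∂μ = ∫ ω, CE ω * CE ω ∂μ := by
    nth_rewrite 2 [hCE]
    rw [show (∫ ω, CE ω * X ω ∂μ) = ∫ ω, CE ω * X ω ∂μ from rfl]
    have := my_tower hm hsCE hCE2 hX2
    rw [this, hCE]
  -- integrability of products
  have IXZ : Integrable (fun ω => X ω * Z ω) μ := my_integrable_mul hX2 hZ2
  have IX2 : Integrable (fun ω => X ω ^ 2) μ := hX2.integrable_sq
  have ICC : Integrable (fun ω => CE ω * CE ω) μ := my_integrable_mul hCE2 hCE2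
  have ICX : Integrable (fun ω => CE ω * X ω) μ := my_integrable_mul hCE2 hX2
  have ICR : Integrable (fun ω => CE ω * R ω) μ := my_integrable_mul hCE2 hR2
  have IRRX : Integrable (fun ω => R ω * (R ω - X ω)) μ :=
    my_integrable_mul hR2 (hR2.sub hX2)
  have ICRX : Integrable (fun ω => CE ω * (R ω - X ω)) μ :=
    my_integrable_mul hCE2 (hR2.sub hX2)
  -- E[X R] = E[X²]
  have hXR : ∫ ω, X ω * R ω ∂μ = ∫ ω, X ω ^ 2 ∂μ := by
    rw [hR]
    have e : (fun ω => X ω * (X ω + τ * Z ω)) = fun ω => X ω ^ 2 + τ * (X ω * Z ω) := by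
      funext ω; ring
    have I2 : Integrable (fun ω => τ * (X ω * Z ω)) μ := IXZ.const_mul τ
    rw [e, integral_add IX2 I2, integral_const_mul, hEXZ]
    ring
  -- E[R (R - X)] = τ²
  have hRRX : ∫ ω, R ω * (R ω - X ω) ∂μ = τ ^ 2 := by
    rw [hR]
    have e : (fun ω => (X ω + τ * Z ω) * (X ω + τ * Z ω - X ω))
        = fun ω => τ * (X ω * Z ω) + τ ^ 2 * Z ω ^ 2 := by
      funext ω; ring
    have I1 : Integrable (fun ω => τ * (X ω * Z ω)) μ := IXZ.const_mul τ
    have I2 : Integrable (fun ω => τ ^ 2 * Z ω ^ 2) μ := hIZ2.const_mul (τ ^ 2)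
    rw [e, integral_add I1 I2, integral_const_mul, integral_const_mul, hEXZ, hEZ2]
    ring
  -- mmseB = E[X²] - E[CE²]
  have hb : mmseB = (∫ ω, X ω ^ 2 ∂μ) - ∫ ω, CE ω * CE ω ∂μ := by
    have e : (fun ω => (CE ω - X ω) ^ 2)
        = fun ω => (CE ω * CE ω - 2 * (CE ω * X ω)) + X ω ^ 2 := by
      funext ω; ring
    have I1 : Integrable (fun ω => CE ω * CE ω - 2 * (CE ω * X ω)) μ :=
      ICC.sub (ICX.const_mul 2)
    rw [hmmseB, e, integral_add I1 IX2, integral_sub ICC (ICX.const_mul 2),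
      integral_const_mul, tCE]
    ring
  -- E[CE (R - X)] = mmseB
  have hCERX : ∫ ω, CE ω * (R ω - X ω) ∂μ = mmseB := by
    have e : (fun ω => CE ω * (R ω - X ω)) = fun ω => CE ω * R ω - CE ω * X ω := by
      funext ω; ring
    have eRC : ∫ ω, CE ω * R ω ∂μ = ∫ ω, R ω * CE ω ∂μ := by
      congr 1; funext ω; ring
    have eXR : ∫ ω, R ω * X ω ∂μ = ∫ ω, X ω * R ω ∂μ := by
      congr 1; funext ω; ring
    rw [e, integral_sub ICR ICX, eRC, ← tR, eXR, hXR, tCE, hb]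
  -- scalar identity
  have hτ2 : τ ^ 2 ≠ 0 := pow_ne_zero 2 hτ.ne'
  have hden : τ ^ 2 - mmseB ≠ 0 := ne_of_gt (by linarith)
  have hkey : Cstar * (mmseB / τ ^ 2) = Cstar - 1 := by
    rw [hCstar]
    field_simp
    ring
  -- E[ηstar (R - X)] = 0
  have hstRX : ∫ ω, ηstar ω * (R ω - X ω) ∂μ = 0 := by
    have e : (fun ω => ηstar ω * (R ω - X ω))
        = fun ω => Cstar * (CE ω * (R ω - X ω))
          - (Cstar * (mmseB / τ ^ 2)) * (R ω * (R ω - X ω)) := by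
      funext ω; rw [hηstar]; ring
    have hmul : Cstar * (mmseB / τ ^ 2) * τ ^ 2 = Cstar * mmseB := by
      field_simp
    rw [e, integral_sub (ICRX.const_mul Cstar) (IRRX.const_mul _),
      integral_const_mul, integral_const_mul, hCERX, hRRX]
    linarith
  -- the key orthogonality computation
  have K : ∀ f : Ω → ℝ, StronglyMeasurable[MeasurableSpace.comap R inferInstance] f →
      MemLp f 2 μ →
      ∫ ω, f ω * (ηstar ω - X ω) ∂μ = -(Cstar - 1) * ∫ ω, f ω * (R ω - X ω) ∂μ := by
    intro f hfm hf2
    have hfX : ∫ ω, f ω * X ω ∂μ = ∫ ω, f ω * CE ω ∂μ := by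
      rw [hCE]; exact my_tower hm hfm hf2 hX2
    have IfCE : Integrable (fun ω => f ω * CE ω) μ := my_integrable_mul hf2 hCE2
    have IfR : Integrable (fun ω => f ω * R ω) μ := my_integrable_mul hf2 hR2
    have IfX : Integrable (fun ω => f ω * X ω) μ := my_integrable_mul hf2 hX2
    have e : (fun ω => f ω * (ηstar ω - X ω))
        = fun ω => (Cstar * (f ω * CE ω) - (Cstar * (mmseB / τ ^ 2)) * (f ω * R ω))
          - f ω * X ω := by
      funext ω; rw [hηstar]; ring
    have e2 : (fun ω => f ω * (R ω - X ω)) = fun ω => f ω * R ω - f ω * X ω := by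
      funext ω; ring
    have Ia : Integrable (fun ω => Cstar * (f ω * CE ω)) μ := IfCE.const_mul Cstar
    have Ib : Integrable (fun ω => Cstar * (mmseB / τ ^ 2) * (f ω * R ω)) μ :=
      IfR.const_mul _
    have I12 : Integrable
        (fun ω => Cstar * (f ω * CE ω) - Cstar * (mmseB / τ ^ 2) * (f ω * R ω)) μ := Ia.sub Ib
    rw [e, e2, integral_sub I12 IfX, integral_sub Ia Ib,
      integral_const_mul, integral_const_mul, integral_sub IfR IfX, ← hfX, hkey]
    ring
  -- both η and ηstar are orthogonal to (ηstar - X)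
  have horth2 : ∫ ω, η (R ω) * (ηstar ω - X ω) ∂μ = 0 := by
    rw [K _ hsη hη2, horth, mul_zero]
  have hstorth : ∫ ω, ηstar ω * (ηstar ω - X ω) ∂μ = 0 := by
    rw [K _ hsst hst2, hstRX, mul_zero]
  have hcross : ∫ ω, (η (R ω) - ηstar ω) * (ηstar ω - X ω) ∂μ = 0 := by
    have e : (fun ω => (η (R ω) - ηstar ω) * (ηstar ω - X ω))
        = fun ω => η (R ω) * (ηstar ω - X ω) - ηstar ω * (ηstar ω - X ω) := by
      funext ω; ring
    have I1 : Integrable (fun ω => η (R ω) * (ηstar ω - X ω)) μ :=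
      my_integrable_mul hη2 (hst2.sub hX2)
    have I2 : Integrable (fun ω => ηstar ω * (ηstar ω - X ω)) μ :=
      my_integrable_mul hst2 (hst2.sub hX2)
    rw [e, integral_sub I1 I2, horth2, hstorth, sub_zero]
  -- quadratic expansion
  have Iq1 : Integrable (fun ω => (η (R ω) - ηstar ω) ^ 2) μ := (hη2.sub hst2).integrable_sq
  have Iq2 : Integrable (fun ω => (ηstar ω - X ω) ^ 2) μ := (hst2.sub hX2).integrable_sq
  have Icr : Integrable (fun ω => (η (R ω) - ηstar ω) * (ηstar ω - X ω)) μ :=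
    my_integrable_mul (hη2.sub hst2) (hst2.sub hX2)
  have hfinal : ∫ ω, (η (R ω) - X ω) ^ 2 ∂μ
      = (∫ ω, (η (R ω) - ηstar ω) ^ 2 ∂μ) + ∫ ω, (ηstar ω - X ω) ^ 2 ∂μ := by
    have e : (fun ω => (η (R ω) - X ω) ^ 2)
        = fun ω => (η (R ω) - ηstar ω) ^ 2
          + (2 * ((η (R ω) - ηstar ω) * (ηstar ω - X ω)) + (ηstar ω - X ω) ^ 2) := by
      funext ω; ring
    have I3 : Integrable
        (fun ω => 2 * ((η (R ω) - ηstar ω) * (ηstar ω - X ω)) + (ηstar ω - X ω) ^ 2) μ :=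
      (Icr.const_mul 2).add Iq2
    rw [e, integral_add Iq1 I3, integral_add (Icr.const_mul 2) Iq2,
      integral_const_mul, hcross]
    ring
  have hnn : 0 ≤ ∫ ω, (η (R ω) - ηstar ω) ^ 2 ∂μ :=
    integral_nonneg fun ω => sq_nonneg _
  constructor
  · rw [ge_iff_le, hfinal]; linarith
  · constructor
    · intro heq
      have h0 : ∫ ω, (η (R ω) - ηstar ω) ^ 2 ∂μ = 0 := by linarith
      have hae := (integral_eq_zero_iff_of_nonneg (fun ω => sq_nonneg _) Iq1).mp h0
      filter_upwards [hae] with ω hω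
      have h1 : (η (R ω) - ηstar ω) ^ 2 = 0 := hω
      have h2 : η (R ω) - ηstar ω = 0 := by
        exact sq_eq_zero_iff.mp h1
      linarith
    · intro hae
      have h0 : (fun ω => (η (R ω) - ηstar ω) ^ 2) =ᵐ[μ] 0 := by
        filter_upwards [hae] with ω hω
        simp [hω]
      have h1 : ∫ ω, (η (R ω) - ηstar ω) ^ 2 ∂μ = 0 := by
        rw [integral_congr_ae h0]
        simp
      linarith
end

section
/- Let M < N and let A be a real M×N matrix such that A·Aᵀ is invertible. Set W = (N/M)·Aᵀ·(A·Aᵀ)⁻¹ and B = I − W·A. Then tr(I − W·A) = 0 (so W is a de-correlated linear estimator), (1/N)·tr(B·Bᵀ) = (N − M)/M, and (1/N)·tr(W·Wᵀ) = (N/M²)·tr((A·Aᵀ)⁻¹). Consequently, the state-evolution map (1/N)tr(BBᵀ)·v² + (1/N)tr(WWᵀ)·σ² equals ((N − M)/M)·v² + (N/M²)·tr((A·Aᵀ)⁻¹)·σ². -/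
open Matrix

/-- Simplified MSE-estimation formula for the de-correlated pseudo-inverse estimator
(Section III of the paper): for `M < N`, `A·Aᵀ` invertible,
`W = (N/M)·Aᵀ·(A·Aᵀ)⁻¹` and `B = I − W·A`, one has `tr(I − W·A) = 0` (so `W` is
de-correlated), `(1/N)·tr(B·Bᵀ) = (N − M)/M`,
`(1/N)·tr(W·Wᵀ) = (N/M²)·tr((A·Aᵀ)⁻¹)`, and hence the state-evolution map equals
`((N − M)/M)·v² + (N/M²)·tr((A·Aᵀ)⁻¹)·σ²`. -/
theorem pinv_decorrelated_state_evolution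
    (M N : ℕ) (hM : 0 < M) (hMN : M < N)
    (A : Matrix (Fin M) (Fin N) ℝ)
    (hinv : IsUnit (A * Aᵀ).det)
    (W : Matrix (Fin N) (Fin M) ℝ)
    (hW : W = ((N : ℝ) / M) • (Aᵀ * (A * Aᵀ)⁻¹))
    (B : Matrix (Fin N) (Fin N) ℝ) (hB : B = 1 - W * A) :
    Matrix.trace ((1 : Matrix (Fin N) (Fin N) ℝ) - W * A) = 0
    ∧ (1 / N : ℝ) * Matrix.trace (B * Bᵀ) = ((N : ℝ) - M) / M
    ∧ (1 / N : ℝ) * Matrix.trace (W * Wᵀ)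
        = ((N : ℝ) / M ^ 2) * Matrix.trace (A * Aᵀ)⁻¹
    ∧ ∀ v2 σ2 : ℝ,
        (1 / N : ℝ) * Matrix.trace (B * Bᵀ) * v2
          + (1 / N : ℝ) * Matrix.trace (W * Wᵀ) * σ2
        = ((N : ℝ) - M) / M * v2
          + ((N : ℝ) / M ^ 2) * Matrix.trace (A * Aᵀ)⁻¹ * σ2 := by
  have hM0 : (M : ℝ) ≠ 0 := Nat.cast_ne_zero.mpr hM.ne'
  have hN0 : (N : ℝ) ≠ 0 := Nat.cast_ne_zero.mpr (by omega)
  set c : ℝ := (N : ℝ) / M with hc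
  set G : Matrix (Fin M) (Fin M) ℝ := A * Aᵀ with hG
  have hGi1 : G⁻¹ * G = 1 := Matrix.nonsing_inv_mul _ hinv
  have hGi2 : G * G⁻¹ = 1 := Matrix.mul_nonsing_inv _ hinv
  have hGsym : Gᵀ = G := by rw [hG, Matrix.transpose_mul, Matrix.transpose_transpose]
  have hGisym : (G⁻¹)ᵀ = G⁻¹ := by rw [Matrix.transpose_nonsing_inv, hGsym]
  -- the projection P = Aᵀ G⁻¹ A
  set P : Matrix (Fin N) (Fin N) ℝ := Aᵀ * G⁻¹ * A with hP
  have hWA : W * A = c • P := by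
    rw [hW, Matrix.smul_mul, hP]
  have htrP : Matrix.trace P = M := by
    rw [hP, Matrix.trace_mul_comm, ← Matrix.mul_assoc, ← hG, hGi2, Matrix.trace_one]
    simp
  have hProj : P * P = P := by
    rw [hP]
    simp only [Matrix.mul_assoc]
    rw [← Matrix.mul_assoc A Aᵀ, ← hG, ← Matrix.mul_assoc G⁻¹ G, hGi1, Matrix.one_mul]
  have htrWA : Matrix.trace (W * A) = N := by
    rw [hWA, Matrix.trace_smul, htrP, hc, smul_eq_mul]
    field_simp
  have h1 : Matrix.trace ((1 : Matrix (Fin N) (Fin N) ℝ) - W * A) = 0 := by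
    rw [Matrix.trace_sub, Matrix.trace_one, htrWA]
    simp
  -- symmetry of W*A
  have hWAsym : (W * A)ᵀ = W * A := by
    rw [hWA, Matrix.transpose_smul, hP, Matrix.transpose_mul, Matrix.transpose_mul,
      hGisym, Matrix.transpose_transpose, Matrix.mul_assoc]
  -- trace (B Bᵀ)
  have htrBB : Matrix.trace (B * Bᵀ) = c ^ 2 * M - N := by
    have hBT : Bᵀ = B := by
      rw [hB, Matrix.transpose_sub, Matrix.transpose_one, hWAsym]
    rw [hBT, hB, hWA]
    have expand : ((1 : Matrix (Fin N) (Fin N) ℝ) - c • P) * (1 - c • P)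
        = 1 - c • P - c • P + (c ^ 2) • (P * P) := by
      rw [Matrix.sub_mul, Matrix.mul_sub, Matrix.mul_sub, Matrix.one_mul, Matrix.mul_one,
        Matrix.smul_mul]
      simp only [Matrix.one_mul, Matrix.mul_smul, smul_smul, sq]
      abel
    rw [expand, hProj]
    rw [Matrix.trace_add, Matrix.trace_sub, Matrix.trace_sub, Matrix.trace_one,
      Matrix.trace_smul, htrP]
    simp only [Fintype.card_fin, smul_eq_mul, hc]
    field_simp
    rw [Matrix.trace_smul, htrP, smul_eq_mul]
    field_simp
    ring
  have h2 : (1 / N : ℝ) * Matrix.trace (B * Bᵀ) = ((N : ℝ) - M) / M := by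
    rw [htrBB, hc]
    field_simp
  -- trace (W Wᵀ)
  have htrWW : Matrix.trace (W * Wᵀ) = c ^ 2 * Matrix.trace G⁻¹ := by
    rw [hW, Matrix.transpose_smul, Matrix.transpose_mul, hGisym, Matrix.transpose_transpose,
      Matrix.smul_mul, Matrix.mul_smul, smul_smul, Matrix.trace_smul, smul_eq_mul, ← sq]
    congr 1
    rw [Matrix.trace_mul_comm, Matrix.mul_assoc, ← Matrix.mul_assoc A Aᵀ, ← hG,
      ← Matrix.mul_assoc G⁻¹ G, hGi1, Matrix.one_mul]
  have h3 : (1 / N : ℝ) * Matrix.trace (W * Wᵀ)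
      = ((N : ℝ) / M ^ 2) * Matrix.trace (A * Aᵀ)⁻¹ := by
    rw [htrWW, hc, ← hG]
    field_simp
  exact ⟨h1, h2, h3, fun v2 σ2 => by rw [h2, h3]⟩
end
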